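/- arXiv:1703.07372 — 3 statements merged into one kernel-verified Lean document; each statement's English description precedes it below -/
import Mathlib

section
/- For the two-dimensional vector field U(x) = (1/(2π)) (x^⊥/|x|²)(1 − e^{−|x|²/4}) on ℝ² \ {0} (where x^⊥ = (−x₂, x₁)), one has ΔU(x) = (−∂₂G(x), ∂₁G(x)) where G(x) = (1/(4π)) e^{−|x|²/4}. -/
open Real

/-- Partial derivative in direction `i` of a scalar function on `ℝ²`. -/
noncomputable def pd (i : Fin 2) (f : (Fin 2 → ℝ) → ℝ) (x : Fin 2 → ℝ) : ℝ :=
  fderiv ℝ f x (Pi.single i 1)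

/-- `|x|² = x₁² + x₂²`. -/
def nsq (x : Fin 2 → ℝ) : ℝ := x 0 ^ 2 + x 1 ^ 2

/-- First component of `U(x) = (1/(2π)) (x^⊥/|x|²)(1 − e^{−|x|²/4})`. -/
noncomputable def U0 (x : Fin 2 → ℝ) : ℝ :=
  (1 / (2 * π)) * (-(x 1) / nsq x) * (1 - Real.exp (-(nsq x) / 4))

/-- Second component of `U`. -/
noncomputable def U1 (x : Fin 2 → ℝ) : ℝ :=
  (1 / (2 * π)) * (x 0 / nsq x) * (1 - Real.exp (-(nsq x) / 4))

/-- The Gaussian `G(x) = (1/(4π)) e^{−|x|²/4}`. -/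
noncomputable def Gauss (x : Fin 2 → ℝ) : ℝ :=
  (1 / (4 * π)) * Real.exp (-(nsq x) / 4)

/-! ### Auxiliary definitions: the first partial derivatives of `U0`, `U1` -/

/-- `∂₀ U0`. -/
noncomputable def A0 (x : Fin 2 → ℝ) : ℝ :=
  (1 / (2 * π)) * ((2 * x 0 * x 1) * (1 - Real.exp (-(nsq x) / 4)) / (nsq x) ^ 2
    + (-(x 0 * x 1) / 2) * Real.exp (-(nsq x) / 4) / (nsq x))

/-- `∂₁ U0`. -/
noncomputable def B0 (x : Fin 2 → ℝ) : ℝ :=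
  (1 / (2 * π)) * ((x 1 ^ 2 - x 0 ^ 2) * (1 - Real.exp (-(nsq x) / 4)) / (nsq x) ^ 2
    + (-(x 1 ^ 2) / 2) * Real.exp (-(nsq x) / 4) / (nsq x))

/-- `∂₀ U1`. -/
noncomputable def A1 (x : Fin 2 → ℝ) : ℝ :=
  (1 / (2 * π)) * ((x 1 ^ 2 - x 0 ^ 2) * (1 - Real.exp (-(nsq x) / 4)) / (nsq x) ^ 2
    + (x 0 ^ 2 / 2) * Real.exp (-(nsq x) / 4) / (nsq x))

/-- `∂₁ U1`. -/
noncomputable def B1 (x : Fin 2 → ℝ) : ℝ :=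
  (1 / (2 * π)) * ((-(2 * x 0 * x 1)) * (1 - Real.exp (-(nsq x) / 4)) / (nsq x) ^ 2
    + (x 0 * x 1 / 2) * Real.exp (-(nsq x) / 4) / (nsq x))

/-! ### Generic one-dimensional derivative lemmas -/

lemma key1 {a s : ℝ → ℝ} {a' s' t : ℝ} (C : ℝ) (ha : HasDerivAt a a' t)
    (hs : HasDerivAt s s' t) (h0 : s t ≠ 0) :
    HasDerivAt (fun u => C * (a u / s u) * (1 - Real.exp (-(s u) / 4)))
      (C * ((a' * s t - a t * s') / (s t) ^ 2) * (1 - Real.exp (-(s t) / 4))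
        + C * (a t / s t) * (Real.exp (-(s t) / 4) * (s' / 4))) t := by
  have hE : HasDerivAt (fun u => Real.exp (-(s u) / 4))
      (Real.exp (-(s t) / 4) * (-(s' / 4))) t := by
    have := (hs.neg.div_const 4).exp
    simp only [Pi.neg_apply] at this
    convert this using 1
    ring
  have h1 : HasDerivAt (fun u => (1 : ℝ) - Real.exp (-(s u) / 4))
      (0 - Real.exp (-(s t) / 4) * (-(s' / 4))) t := (hasDerivAt_const t 1).sub hE
  have h2 := ((ha.div hs h0).const_mul C).mul h1
  refine h2.congr_deriv ?_
  simp only [Pi.div_apply]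
  ring

lemma key2 {p q s : ℝ → ℝ} {p' q' s' t : ℝ} (C : ℝ)
    (hp : HasDerivAt p p' t) (hq : HasDerivAt q q' t) (hs : HasDerivAt s s' t)
    (h0 : s t ≠ 0) :
    HasDerivAt (fun u => C * (p u * (1 - Real.exp (-(s u) / 4)) / (s u) ^ 2
        + q u * Real.exp (-(s u) / 4) / (s u)))
      (C * (((p' * (1 - Real.exp (-(s t) / 4)) + p t * (s' / 4) * Real.exp (-(s t) / 4)) * (s t) ^ 2
              - p t * (1 - Real.exp (-(s t) / 4)) * (2 * s t * s')) / (s t) ^ 4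
           + ((q' * Real.exp (-(s t) / 4) - q t * (s' / 4) * Real.exp (-(s t) / 4)) * s t
              - q t * Real.exp (-(s t) / 4) * s') / (s t) ^ 2)) t := by
  have hE : HasDerivAt (fun u => Real.exp (-(s u) / 4))
      (Real.exp (-(s t) / 4) * (-(s' / 4))) t := by
    have := (hs.neg.div_const 4).exp
    simp only [Pi.neg_apply] at this
    convert this using 1
    ring
  have h1 : HasDerivAt (fun u => (1 : ℝ) - Real.exp (-(s u) / 4))
      (0 - Real.exp (-(s t) / 4) * (-(s' / 4))) t := (hasDerivAt_const t 1).sub hE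
  have hs2 : HasDerivAt (fun u => (s u) ^ 2) ((2 : ℕ) * s t ^ 1 * s') t := hs.pow 2
  have hfrac1 := (hp.mul h1).div hs2 (pow_ne_zero 2 h0)
  have hfrac2 := (hq.mul hE).div hs h0
  have h2 := (hfrac1.add hfrac2).const_mul C
  refine h2.congr_deriv ?_
  simp only [Pi.mul_apply]
  field_simp
  ring

/-- Partial derivatives via one-dimensional derivatives along coordinate lines. -/
lemma pd_eq {f : (Fin 2 → ℝ) → ℝ} {x : Fin 2 → ℝ} {i : Fin 2} {D : ℝ}
    (hf : DifferentiableAt ℝ f x)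
    (h : HasDerivAt (fun t => f (Function.update x i t)) D (x i)) :
    pd i f x = D := by
  have hg : HasDerivAt (fun t : ℝ => Function.update x i t) (Pi.single i 1) (x i) := by
    have h1 : (fun t : ℝ => Function.update x i t)
        = (fun t => x + (t - x i) • (Pi.single i 1 : Fin 2 → ℝ)) := by
      funext t
      funext j
      rcases eq_or_ne j i with rfl | hj
      · simp
      · simp [Function.update_of_ne hj, Pi.single_eq_of_ne hj]
    rw [h1]
    have h2 := (((hasDerivAt_id (x i)).sub_const (x i)).smul_const
      (Pi.single i 1 : Fin 2 → ℝ)).const_add x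
    simpa using h2
  have hgx : Function.update x i (x i) = x := Function.update_eq_self i x
  have hf' : HasFDerivAt f (fderiv ℝ f x) (Function.update x i (x i)) := by
    rw [hgx]; exact hf.hasFDerivAt
  have h2 := hf'.comp_hasDerivAt (x i) hg
  exact (h.unique h2).symm

/-! ### Differentiability lemmas -/

lemma diffPat1 {a : (Fin 2 → ℝ) → ℝ} {x : Fin 2 → ℝ}
    (ha : DifferentiableAt ℝ a x) (h' : x 0 ^ 2 + x 1 ^ 2 ≠ 0) (C : ℝ) :
    DifferentiableAt ℝ
      (fun y : Fin 2 → ℝ => C * (a y / (y 0 ^ 2 + y 1 ^ 2))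
        * (1 - Real.exp (-(y 0 ^ 2 + y 1 ^ 2) / 4))) x := by
  have dn : DifferentiableAt ℝ (fun y : Fin 2 → ℝ => y 0 ^ 2 + y 1 ^ 2) x := by fun_prop
  have e2 : DifferentiableAt ℝ
      (fun y : Fin 2 → ℝ => (1 : ℝ) - Real.exp (-(y 0 ^ 2 + y 1 ^ 2) / 4)) x := by fun_prop
  have e3 : DifferentiableAt ℝ (fun y : Fin 2 → ℝ => a y / (y 0 ^ 2 + y 1 ^ 2)) x := by
    simp only [div_eq_mul_inv]
    exact ha.mul (dn.inv h')
  exact (e3.const_mul _).mul e2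

lemma diffPat2 {P Q : (Fin 2 → ℝ) → ℝ} {x : Fin 2 → ℝ}
    (hP : DifferentiableAt ℝ P x) (hQ : DifferentiableAt ℝ Q x)
    (h' : x 0 ^ 2 + x 1 ^ 2 ≠ 0) (C : ℝ) :
    DifferentiableAt ℝ
      (fun y : Fin 2 → ℝ => C * (P y * (1 - Real.exp (-(y 0 ^ 2 + y 1 ^ 2) / 4))
          / (y 0 ^ 2 + y 1 ^ 2) ^ 2
        + Q y * Real.exp (-(y 0 ^ 2 + y 1 ^ 2) / 4) / (y 0 ^ 2 + y 1 ^ 2))) x := by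
  have dn : DifferentiableAt ℝ (fun y : Fin 2 → ℝ => y 0 ^ 2 + y 1 ^ 2) x := by fun_prop
  have e2 : DifferentiableAt ℝ
      (fun y : Fin 2 → ℝ => (1 : ℝ) - Real.exp (-(y 0 ^ 2 + y 1 ^ 2) / 4)) x := by fun_prop
  have eE : DifferentiableAt ℝ
      (fun y : Fin 2 → ℝ => Real.exp (-(y 0 ^ 2 + y 1 ^ 2) / 4)) x := by fun_prop
  have t1 : DifferentiableAt ℝ
      (fun y : Fin 2 → ℝ => P y * (1 - Real.exp (-(y 0 ^ 2 + y 1 ^ 2) / 4))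
        / (y 0 ^ 2 + y 1 ^ 2) ^ 2) x := by
    simp only [div_eq_mul_inv]
    exact (hP.mul e2).mul ((dn.pow 2).inv (pow_ne_zero 2 h'))
  have t2 : DifferentiableAt ℝ
      (fun y : Fin 2 → ℝ => Q y * Real.exp (-(y 0 ^ 2 + y 1 ^ 2) / 4)
        / (y 0 ^ 2 + y 1 ^ 2)) x := by
    simp only [div_eq_mul_inv]
    exact (hQ.mul eE).mul (dn.inv h')
  exact (t1.add t2).const_mul C

lemma ne10 : (1 : Fin 2) ≠ 0 := by decide
lemma ne01 : (0 : Fin 2) ≠ 1 := by decide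

lemma diffU0 {x : Fin 2 → ℝ} (h' : x 0 ^ 2 + x 1 ^ 2 ≠ 0) : DifferentiableAt ℝ U0 x := by
  have := diffPat1 (a := fun y : Fin 2 → ℝ => -(y 1)) (x := x) (by fun_prop) h' (1 / (2 * π))
  exact this

lemma diffU1 {x : Fin 2 → ℝ} (h' : x 0 ^ 2 + x 1 ^ 2 ≠ 0) : DifferentiableAt ℝ U1 x := by
  have := diffPat1 (a := fun y : Fin 2 → ℝ => y 0) (x := x) (by fun_prop) h' (1 / (2 * π))
  exact this

lemma diffA0 {x : Fin 2 → ℝ} (h' : x 0 ^ 2 + x 1 ^ 2 ≠ 0) : DifferentiableAt ℝ A0 x := by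
  have := diffPat2 (P := fun y : Fin 2 → ℝ => 2 * y 0 * y 1)
    (Q := fun y : Fin 2 → ℝ => -(y 0 * y 1) / 2) (x := x) (by fun_prop) (by fun_prop) h'
    (1 / (2 * π))
  exact this

lemma diffB0 {x : Fin 2 → ℝ} (h' : x 0 ^ 2 + x 1 ^ 2 ≠ 0) : DifferentiableAt ℝ B0 x := by
  have := diffPat2 (P := fun y : Fin 2 → ℝ => y 1 ^ 2 - y 0 ^ 2)
    (Q := fun y : Fin 2 → ℝ => -(y 1 ^ 2) / 2) (x := x) (by fun_prop) (by fun_prop) h'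
    (1 / (2 * π))
  exact this

lemma diffA1 {x : Fin 2 → ℝ} (h' : x 0 ^ 2 + x 1 ^ 2 ≠ 0) : DifferentiableAt ℝ A1 x := by
  have := diffPat2 (P := fun y : Fin 2 → ℝ => y 1 ^ 2 - y 0 ^ 2)
    (Q := fun y : Fin 2 → ℝ => y 0 ^ 2 / 2) (x := x) (by fun_prop) (by fun_prop) h'
    (1 / (2 * π))
  exact this

lemma diffB1 {x : Fin 2 → ℝ} (h' : x 0 ^ 2 + x 1 ^ 2 ≠ 0) : DifferentiableAt ℝ B1 x := by
  have := diffPat2 (P := fun y : Fin 2 → ℝ => -(2 * y 0 * y 1))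
    (Q := fun y : Fin 2 → ℝ => y 0 * y 1 / 2) (x := x) (by fun_prop) (by fun_prop) h'
    (1 / (2 * π))
  exact this

lemma diffGauss {x : Fin 2 → ℝ} : DifferentiableAt ℝ Gauss x := by
  have : DifferentiableAt ℝ
      (fun y : Fin 2 → ℝ => (1 / (4 * π)) * Real.exp (-(y 0 ^ 2 + y 1 ^ 2) / 4)) x := by
    fun_prop
  exact this

/-! ### First partial derivatives of `U0`, `U1` -/

lemma pdU0_0 (x : Fin 2 → ℝ) (h : nsq x ≠ 0) : pd 0 U0 x = A0 x := by
  have h' : x 0 ^ 2 + x 1 ^ 2 ≠ 0 := h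
  have hsl : (fun t => U0 (Function.update x 0 t))
      = (fun t => (1 / (2 * π)) * (-(x 1) / (t ^ 2 + x 1 ^ 2))
          * (1 - Real.exp (-(t ^ 2 + x 1 ^ 2) / 4))) := by
    funext t
    simp only [U0, nsq, Function.update_self, Function.update_of_ne ne10]
  refine pd_eq (diffU0 h') ?_
  rw [hsl]
  have K := key1 (1 / (2 * π)) (hasDerivAt_const (x 0) (-(x 1)))
    ((hasDerivAt_pow 2 (x 0)).add_const (x 1 ^ 2)) (by exact h')
  convert K using 1
  simp only [A0, nsq]
  field_simp
  ring

lemma pdU0_1 (x : Fin 2 → ℝ) (h : nsq x ≠ 0) : pd 1 U0 x = B0 x := by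
  have h' : x 0 ^ 2 + x 1 ^ 2 ≠ 0 := h
  have hsl : (fun t => U0 (Function.update x 1 t))
      = (fun t => (1 / (2 * π)) * (-t / (x 0 ^ 2 + t ^ 2))
          * (1 - Real.exp (-(x 0 ^ 2 + t ^ 2) / 4))) := by
    funext t
    simp only [U0, nsq, Function.update_self, Function.update_of_ne ne01]
  refine pd_eq (diffU0 h') ?_
  rw [hsl]
  have K := key1 (1 / (2 * π)) (hasDerivAt_id (x 1)).neg
    ((hasDerivAt_pow 2 (x 1)).const_add (x 0 ^ 2)) (by exact h')
  convert K using 1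
  · rfl
  simp only [B0, nsq, Pi.neg_apply, id]
  field_simp
  ring

lemma pdU1_0 (x : Fin 2 → ℝ) (h : nsq x ≠ 0) : pd 0 U1 x = A1 x := by
  have h' : x 0 ^ 2 + x 1 ^ 2 ≠ 0 := h
  have hsl : (fun t => U1 (Function.update x 0 t))
      = (fun t => (1 / (2 * π)) * (t / (t ^ 2 + x 1 ^ 2))
          * (1 - Real.exp (-(t ^ 2 + x 1 ^ 2) / 4))) := by
    funext t
    simp only [U1, nsq, Function.update_self, Function.update_of_ne ne10]
  refine pd_eq (diffU1 h') ?_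
  rw [hsl]
  have K := key1 (1 / (2 * π)) (hasDerivAt_id (x 0))
    ((hasDerivAt_pow 2 (x 0)).add_const (x 1 ^ 2)) (by exact h')
  convert K using 1
  · rfl
  simp only [A1, nsq, Pi.neg_apply, id]
  field_simp
  ring

lemma pdU1_1 (x : Fin 2 → ℝ) (h : nsq x ≠ 0) : pd 1 U1 x = B1 x := by
  have h' : x 0 ^ 2 + x 1 ^ 2 ≠ 0 := h
  have hsl : (fun t => U1 (Function.update x 1 t))
      = (fun t => (1 / (2 * π)) * (x 0 / (x 0 ^ 2 + t ^ 2))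
          * (1 - Real.exp (-(x 0 ^ 2 + t ^ 2) / 4))) := by
    funext t
    simp only [U1, nsq, Function.update_self, Function.update_of_ne ne01]
  refine pd_eq (diffU1 h') ?_
  rw [hsl]
  have K := key1 (1 / (2 * π)) (hasDerivAt_const (x 1) (x 0))
    ((hasDerivAt_pow 2 (x 1)).const_add (x 0 ^ 2)) (by exact h')
  convert K using 1
  simp only [B1, nsq]
  field_simp
  ring

/-! ### Second-level computations -/

lemma lap0 (x : Fin 2 → ℝ) (h : nsq x ≠ 0) :
    pd 0 A0 x + pd 1 B0 x = -(pd 1 Gauss x) := by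
  have h' : x 0 ^ 2 + x 1 ^ 2 ≠ 0 := h
  -- pd 0 A0
  have hsl0 : (fun t => A0 (Function.update x 0 t))
      = (fun t => (1 / (2 * π)) * ((2 * t * x 1) * (1 - Real.exp (-(t ^ 2 + x 1 ^ 2) / 4))
            / (t ^ 2 + x 1 ^ 2) ^ 2
          + (-(t * x 1) / 2) * Real.exp (-(t ^ 2 + x 1 ^ 2) / 4) / (t ^ 2 + x 1 ^ 2))) := by
    funext t
    simp only [A0, nsq, Function.update_self, Function.update_of_ne ne10]
  have P0 := pd_eq (diffA0 h') (by
    rw [hsl0]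
    exact key2 (1 / (2 * π)) (((hasDerivAt_id (x 0)).const_mul 2).mul_const (x 1))
      ((((hasDerivAt_id (x 0)).mul_const (x 1)).neg).div_const 2)
      ((hasDerivAt_pow 2 (x 0)).add_const (x 1 ^ 2)) (by exact h'))
  -- pd 1 B0
  have hsl1 : (fun t => B0 (Function.update x 1 t))
      = (fun t => (1 / (2 * π)) * ((t ^ 2 - x 0 ^ 2) * (1 - Real.exp (-(x 0 ^ 2 + t ^ 2) / 4))
            / (x 0 ^ 2 + t ^ 2) ^ 2
          + (-(t ^ 2) / 2) * Real.exp (-(x 0 ^ 2 + t ^ 2) / 4) / (x 0 ^ 2 + t ^ 2))) := by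
    funext t
    simp only [B0, nsq, Function.update_self, Function.update_of_ne ne01]
  have P1 := pd_eq (diffB0 h') (by
    rw [hsl1]
    exact key2 (1 / (2 * π)) ((hasDerivAt_pow 2 (x 1)).sub_const (x 0 ^ 2))
      (((hasDerivAt_pow 2 (x 1)).neg).div_const 2)
      ((hasDerivAt_pow 2 (x 1)).const_add (x 0 ^ 2)) (by exact h'))
  -- pd 1 Gauss
  have hslG : (fun t => Gauss (Function.update x 1 t))
      = (fun t => (1 / (4 * π)) * Real.exp (-(x 0 ^ 2 + t ^ 2) / 4)) := by
    funext t
    simp only [Gauss, nsq, Function.update_self, Function.update_of_ne ne01]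
  have PG := pd_eq diffGauss (by
    rw [hslG]
    exact ((((hasDerivAt_pow 2 (x 1)).const_add (x 0 ^ 2)).neg.div_const 4).exp).const_mul
      (1 / (4 * π)))
  rw [P0, P1, PG]
  norm_num
  field_simp
  ring

lemma lap1 (x : Fin 2 → ℝ) (h : nsq x ≠ 0) :
    pd 0 A1 x + pd 1 B1 x = pd 0 Gauss x := by
  have h' : x 0 ^ 2 + x 1 ^ 2 ≠ 0 := h
  -- pd 0 A1
  have hsl0 : (fun t => A1 (Function.update x 0 t))
      = (fun t => (1 / (2 * π)) * ((x 1 ^ 2 - t ^ 2) * (1 - Real.exp (-(t ^ 2 + x 1 ^ 2) / 4))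
            / (t ^ 2 + x 1 ^ 2) ^ 2
          + (t ^ 2 / 2) * Real.exp (-(t ^ 2 + x 1 ^ 2) / 4) / (t ^ 2 + x 1 ^ 2))) := by
    funext t
    simp only [A1, nsq, Function.update_self, Function.update_of_ne ne10]
  have P0 := pd_eq (diffA1 h') (by
    rw [hsl0]
    exact key2 (1 / (2 * π)) ((hasDerivAt_pow 2 (x 0)).const_sub (x 1 ^ 2))
      ((hasDerivAt_pow 2 (x 0)).div_const 2)
      ((hasDerivAt_pow 2 (x 0)).add_const (x 1 ^ 2)) (by exact h'))
  -- pd 1 B1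
  have hsl1 : (fun t => B1 (Function.update x 1 t))
      = (fun t => (1 / (2 * π)) * ((-(2 * x 0 * t)) * (1 - Real.exp (-(x 0 ^ 2 + t ^ 2) / 4))
            / (x 0 ^ 2 + t ^ 2) ^ 2
          + (x 0 * t / 2) * Real.exp (-(x 0 ^ 2 + t ^ 2) / 4) / (x 0 ^ 2 + t ^ 2))) := by
    funext t
    simp only [B1, nsq, Function.update_self, Function.update_of_ne ne01]
  have P1 := pd_eq (diffB1 h') (by
    rw [hsl1]
    exact key2 (1 / (2 * π)) ((((hasDerivAt_id (x 1)).const_mul (2 * x 0)).neg).congr_deriv rfl)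
      (((hasDerivAt_id (x 1)).const_mul (x 0)).div_const 2)
      ((hasDerivAt_pow 2 (x 1)).const_add (x 0 ^ 2)) (by exact h'))
  -- pd 0 Gauss
  have hslG : (fun t => Gauss (Function.update x 0 t))
      = (fun t => (1 / (4 * π)) * Real.exp (-(t ^ 2 + x 1 ^ 2) / 4)) := by
    funext t
    simp only [Gauss, nsq, Function.update_self, Function.update_of_ne ne10]
  have PG := pd_eq diffGauss (by
    rw [hslG]
    exact ((((hasDerivAt_pow 2 (x 0)).add_const (x 1 ^ 2)).neg.div_const 4).exp).const_mul
      (1 / (4 * π)))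
  rw [P0, P1, PG]
  norm_num
  field_simp
  ring

/-- `ΔU(x) = (−∂₂G(x), ∂₁G(x))` for `x ≠ 0`. -/
theorem laplacian_U_eq (x : Fin 2 → ℝ) (hx : x ≠ 0) :
    pd 0 (pd 0 U0) x + pd 1 (pd 1 U0) x = -(pd 1 Gauss x) ∧
    pd 0 (pd 0 U1) x + pd 1 (pd 1 U1) x = pd 0 Gauss x := by
  have hr : nsq x ≠ 0 := by
    intro h
    apply hx
    have h' : x 0 ^ 2 + x 1 ^ 2 = 0 := h
    have h0 : x 0 = 0 := by nlinarith [sq_nonneg (x 0), sq_nonneg (x 1)]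
    have h1 : x 1 = 0 := by nlinarith [sq_nonneg (x 0), sq_nonneg (x 1)]
    funext j
    fin_cases j <;> simp [h0, h1]
  have hS : IsOpen {y : Fin 2 → ℝ | nsq y ≠ 0} := by
    have hc : Continuous nsq := by
      have : nsq = fun y : Fin 2 → ℝ => y 0 ^ 2 + y 1 ^ 2 := rfl
      rw [this]; fun_prop
    exact isOpen_compl_singleton.preimage hc
  have hmem : {y : Fin 2 → ℝ | nsq y ≠ 0} ∈ nhds x := hS.mem_nhds hr
  have hev00 : pd 0 U0 =ᶠ[nhds x] A0 := by
    filter_upwards [hmem] with y hy using pdU0_0 y hy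
  have hev01 : pd 1 U0 =ᶠ[nhds x] B0 := by
    filter_upwards [hmem] with y hy using pdU0_1 y hy
  have hev10 : pd 0 U1 =ᶠ[nhds x] A1 := by
    filter_upwards [hmem] with y hy using pdU1_0 y hy
  have hev11 : pd 1 U1 =ᶠ[nhds x] B1 := by
    filter_upwards [hmem] with y hy using pdU1_1 y hy
  have e00 : pd 0 (pd 0 U0) x = pd 0 A0 x := by
    have hfd : fderiv ℝ (pd 0 U0) x = fderiv ℝ A0 x := hev00.fderiv_eq
    show (fderiv ℝ (pd 0 U0) x) (Pi.single 0 1) = (fderiv ℝ A0 x) (Pi.single 0 1)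
    rw [hfd]
  have e01 : pd 1 (pd 1 U0) x = pd 1 B0 x := by
    have hfd : fderiv ℝ (pd 1 U0) x = fderiv ℝ B0 x := hev01.fderiv_eq
    show (fderiv ℝ (pd 1 U0) x) (Pi.single 1 1) = (fderiv ℝ B0 x) (Pi.single 1 1)
    rw [hfd]
  have e10 : pd 0 (pd 0 U1) x = pd 0 A1 x := by
    have hfd : fderiv ℝ (pd 0 U1) x = fderiv ℝ A1 x := hev10.fderiv_eq
    show (fderiv ℝ (pd 0 U1) x) (Pi.single 0 1) = (fderiv ℝ A1 x) (Pi.single 0 1)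
    rw [hfd]
  have e11 : pd 1 (pd 1 U1) x = pd 1 B1 x := by
    have hfd : fderiv ℝ (pd 1 U1) x = fderiv ℝ B1 x := hev11.fderiv_eq
    show (fderiv ℝ (pd 1 U1) x) (Pi.single 1 1) = (fderiv ℝ B1 x) (Pi.single 1 1)
    rw [hfd]
  constructor
  · rw [e00, e01]; exact lap0 x hr
  · rw [e10, e11]; exact lap1 x hr
end

section
/- For fixed x ∈ ℝ² with x ≠ 0, the time integral ∫₀^∞ | (1/(8πt)) e^{−|x|²/(4t)} − (1 − e^{−|x|²/(4t)})/(2π|x|²) | dt is bounded by a constant C independent of x. -/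
open Real Set MeasureTheory

private lemma exp_poly_bound (u : ℝ) (hu : 0 ≤ u) :
    0 ≤ 1 - (1 + u) * Real.exp (-u) ∧ 1 - (1 + u) * Real.exp (-u) ≤ u ^ 2 := by
  have h1 : u + 1 ≤ Real.exp u := Real.add_one_le_exp u
  have h2 : -u + 1 ≤ Real.exp (-u) := Real.add_one_le_exp (-u)
  have h3 : 0 < Real.exp (-u) := Real.exp_pos _
  have h4 : Real.exp u * Real.exp (-u) = 1 := by
    rw [← Real.exp_add]; simp
  constructor
  · nlinarith
  · nlinarith

/-- For `x ≠ 0`, `∫₀^∞ |(1/(8πt)) e^{−|x|²/(4t)} − (1 − e^{−|x|²/(4t)})/(2π|x|²)| dt ≤ C`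
with `C` an absolute constant independent of `x`. -/
theorem time_integral_B_bounded :
    ∃ C : ℝ, 0 < C ∧ ∀ x : EuclideanSpace ℝ (Fin 2), x ≠ 0 →
      ∫ t in Set.Ioi (0 : ℝ),
        |1 / (8 * π * t) * Real.exp (-‖x‖ ^ 2 / (4 * t))
          - (1 - Real.exp (-‖x‖ ^ 2 / (4 * t))) / (2 * π * ‖x‖ ^ 2)| ≤ C := by
  refine ⟨1, one_pos, fun x hx => ?_⟩
  have hπ : 0 < π := Real.pi_pos
  have hnx : 0 < ‖x‖ := norm_pos_iff.mpr hx
  set r : ℝ := ‖x‖ ^ 2 with hr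
  have hrpos : 0 < r := by positivity
  set F : ℝ → ℝ := fun t =>
    |1 / (8 * π * t) * Real.exp (-r / (4 * t))
      - (1 - Real.exp (-r / (4 * t))) / (2 * π * r)| with hF
  -- rewrite F on positive t
  have hFval : ∀ t : ℝ, 0 < t →
      F t = (1 - (1 + r / (4 * t)) * Real.exp (-(r / (4 * t)))) / (2 * π * r) := by
    intro t ht
    have hu : 0 ≤ r / (4 * t) := by positivity
    have h0 := (exp_poly_bound _ hu).1
    have key : 1 / (8 * π * t) * Real.exp (-r / (4 * t))
        - (1 - Real.exp (-r / (4 * t))) / (2 * π * r)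
        = -((1 - (1 + r / (4 * t)) * Real.exp (-(r / (4 * t)))) / (2 * π * r)) := by
      have : -r / (4 * t) = -(r / (4 * t)) := by ring
      rw [this]
      field_simp
      ring
    rw [hF]
    simp only [key, abs_neg]
    exact abs_of_nonneg (by positivity)
  have hFnonneg : ∀ t : ℝ, 0 ≤ F t := fun t => abs_nonneg _
  -- pointwise bounds
  have hbound1 : ∀ t : ℝ, 0 < t → F t ≤ 1 / (2 * π * r) := by
    intro t ht
    rw [hFval t ht]
    have hu : 0 ≤ r / (4 * t) := by positivity
    have h0 := (exp_poly_bound _ hu).1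
    have h5 : (1 + r / (4 * t)) * Real.exp (-(r / (4 * t))) ≥ 0 := by positivity
    apply div_le_div_of_nonneg_right ?_ (by positivity) |>.trans_eq rfl
    · linarith
  have hbound2 : ∀ t : ℝ, 0 < t → F t ≤ r / (32 * π) * (t ^ 2)⁻¹ := by
    intro t ht
    rw [hFval t ht]
    have hu : 0 ≤ r / (4 * t) := by positivity
    have h1 := (exp_poly_bound _ hu).2
    have : (r / (4 * t)) ^ 2 / (2 * π * r) = r / (32 * π) * (t ^ 2)⁻¹ := by
      field_simp
      ring
    calc (1 - (1 + r / (4 * t)) * Real.exp (-(r / (4 * t)))) / (2 * π * r)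
        ≤ (r / (4 * t)) ^ 2 / (2 * π * r) := by
          apply div_le_div_of_nonneg_right h1 (by positivity)
      _ = r / (32 * π) * (t ^ 2)⁻¹ := this
  -- measurability
  have hmeas : Measurable F := by
    apply Measurable.abs
    apply Measurable.sub
    · exact (measurable_const.div (measurable_const.mul measurable_id)).mul
        ((measurable_const.div (measurable_const.mul measurable_id)).exp)
    · exact (measurable_const.sub ((measurable_const.div
        (measurable_const.mul measurable_id)).exp)).div_const _
  -- integrability on pieces
  have hI1 : IntegrableOn F (Ioc 0 (r / 4)) := by
    apply Integrable.mono' (g := fun _ => 1 / (2 * π * r))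
      (integrableOn_const measure_Ioc_lt_top.ne)
      hmeas.aestronglyMeasurable.restrict
    rw [ae_restrict_iff' measurableSet_Ioc]
    filter_upwards with t ht
    rw [Real.norm_eq_abs, abs_of_nonneg (hFnonneg t)]
    exact hbound1 t ht.1
  have hIg2 : IntegrableOn (fun t : ℝ => r / (32 * π) * (t ^ 2)⁻¹) (Ioi (r / 4)) := by
    have := (integrableOn_Ioi_rpow_of_lt (by norm_num : (-2 : ℝ) < -1)
      (by positivity : (0:ℝ) < r / 4)).const_mul (r / (32 * π))
    apply IntegrableOn.congr_fun this ?_ measurableSet_Ioi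
    intro t ht
    show r / (32 * π) * t ^ (-2 : ℝ) = r / (32 * π) * (t ^ 2)⁻¹
    have ht0 : 0 < t := lt_trans (by positivity) ht
    rw [Real.rpow_neg ht0.le, ← Real.rpow_natCast t 2]
    norm_num
  have hIg2' : IntegrableOn (fun t : ℝ => r / (32 * π) * (t ^ 2)⁻¹) (Ioi (r / 4)) := hIg2
  have hI2 : IntegrableOn F (Ioi (r / 4)) := by
    apply Integrable.mono' hIg2 hmeas.aestronglyMeasurable.restrict
    rw [ae_restrict_iff' measurableSet_Ioi]
    filter_upwards with t ht
    rw [Real.norm_eq_abs, abs_of_nonneg (hFnonneg t)]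
    exact hbound2 t (lt_trans (by positivity) ht)
  -- split the integral
  have hsplit : Ioc (0 : ℝ) (r / 4) ∪ Ioi (r / 4) = Ioi 0 :=
    Ioc_union_Ioi_eq_Ioi (by positivity)
  have hdisj : Disjoint (Ioc (0 : ℝ) (r / 4)) (Ioi (r / 4)) := Ioc_disjoint_Ioi le_rfl
  have heq : ∫ t in Ioi (0 : ℝ), F t
      = (∫ t in Ioc (0 : ℝ) (r / 4), F t) + ∫ t in Ioi (r / 4), F t := by
    rw [← hsplit, setIntegral_union hdisj measurableSet_Ioi hI1 hI2]
  -- bound the two pieces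
  have hb1 : ∫ t in Ioc (0 : ℝ) (r / 4), F t ≤ 1 / (8 * π) := by
    calc ∫ t in Ioc (0 : ℝ) (r / 4), F t
        ≤ ∫ _ in Ioc (0 : ℝ) (r / 4), 1 / (2 * π * r) := by
          apply setIntegral_mono_on hI1
            (integrableOn_const measure_Ioc_lt_top.ne) measurableSet_Ioc
          exact fun t ht => hbound1 t ht.1
      _ = (r / 4) * (1 / (2 * π * r)) := by
          rw [setIntegral_const, Real.volume_real_Ioc, smul_eq_mul,
            max_eq_left (by linarith)]
          ring_nf
      _ = 1 / (8 * π) := by field_simp; ring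
  have hb2 : ∫ t in Ioi (r / 4), F t ≤ 1 / (8 * π) := by
    have hval : ∫ t in Ioi (r / 4), r / (32 * π) * (t ^ 2)⁻¹ = 1 / (8 * π) := by
      have h1 : ∫ t in Ioi (r / 4), r / (32 * π) * t ^ (-2 : ℝ)
          = r / (32 * π) * ∫ t in Ioi (r / 4), t ^ (-2 : ℝ) := by
        exact MeasureTheory.integral_const_mul _ _
      have h2 : ∫ t in Ioi (r / 4), (t : ℝ) ^ (-2 : ℝ)
          = -(r / 4) ^ ((-2 : ℝ) + 1) / ((-2 : ℝ) + 1) :=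
        integral_Ioi_rpow_of_lt (by norm_num) (by positivity)
      have h3 : ∫ t in Ioi (r / 4), r / (32 * π) * (t ^ 2)⁻¹
          = ∫ t in Ioi (r / 4), r / (32 * π) * t ^ (-2 : ℝ) := by
        apply setIntegral_congr_fun measurableSet_Ioi
        intro t ht
        have ht0 : 0 < t := lt_trans (by positivity) ht
        show r / (32 * π) * (t ^ 2)⁻¹ = r / (32 * π) * t ^ (-2 : ℝ)
        rw [Real.rpow_neg ht0.le, ← Real.rpow_natCast t 2]
        norm_num
      rw [h3, h1, h2]
      have : ((-2 : ℝ) + 1) = -1 := by norm_num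
      rw [this]
      rw [Real.rpow_neg_one]
      field_simp
      ring
    calc ∫ t in Ioi (r / 4), F t
        ≤ ∫ t in Ioi (r / 4), r / (32 * π) * (t ^ 2)⁻¹ := by
          apply setIntegral_mono_on hI2 hIg2 measurableSet_Ioi
          exact fun t ht => hbound2 t (lt_trans (by positivity) ht)
      _ = 1 / (8 * π) := hval
  have hπ3 : (3 : ℝ) < π := Real.pi_gt_three
  calc ∫ t in Ioi (0 : ℝ), F t ≤ 1 / (8 * π) + 1 / (8 * π) := by rw [heq]; exact add_le_add hb1 hb2
    _ ≤ 1 := by rw [← add_div]; rw [div_le_one (by positivity)]; linarith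
end

section
/- There exists a constant C > 0 depending only on r ∈ [0,1) such that for all x ∈ ℝ² with |x| ≥ 1, ∫_{|z| ≥ |x|/2} |x − z|^{−1}(1 + |z|)^{−2−r} dz ≤ C (1 + |x|)^{−1−r}. -/
open Real Set MeasureTheory

open Metric
open scoped ENNReal

noncomputable section

local notation "E2" => EuclideanSpace ℝ (Fin 2)

def κ : ℝ≥0∞ := Measure.toSphere (volume : Measure E2) Set.univ

lemma kappa_ne_top : κ ≠ ⊤ := measure_ne_top _ _

lemma polar (f : ℝ → ℝ≥0∞) (hf : Measurable f) :
    ∫⁻ z : E2, f ‖z‖ = κ * ∫⁻ y in Ioi (0:ℝ), ENNReal.ofReal y * f y := by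
  have h1 : ∫⁻ z : E2, f ‖z‖ ∂volume
      = ∫⁻ x : ({0}ᶜ : Set E2), f ‖(x : E2)‖ ∂((volume : Measure E2).comap Subtype.val) := by
    rw [lintegral_subtype_comap (measurableSet_singleton (0:E2)).compl
      (fun z : E2 => f ‖z‖), restrict_compl_singleton]
  rw [h1]
  have hf2 : Measurable fun p : sphere (0:E2) 1 × Ioi (0:ℝ) => f p.2 :=
    hf.comp (measurable_subtype_coe.comp measurable_snd)
  have h3 := (Measure.measurePreserving_homeomorphUnitSphereProd
      (volume : Measure E2)).lintegral_comp hf2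
  simp only [homeomorphUnitSphereProd_apply_snd_coe] at h3
  rw [h3, lintegral_prod _ hf2.aemeasurable]
  simp only []
  have hfI : Measurable fun y : Ioi (0:ℝ) => f ↑y := hf.comp measurable_subtype_coe
  have h4 : ∀ a : sphere (0:E2) 1, ∫⁻ y : Ioi (0:ℝ), f ↑y
      ∂(Measure.volumeIoiPow (Module.finrank ℝ E2 - 1))
      = ∫⁻ y in Ioi (0:ℝ), ENNReal.ofReal y * f y := by
    intro a
    rw [Measure.volumeIoiPow,
      lintegral_withDensity_eq_lintegral_mul _ (by fun_prop) hfI]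
    simp only [Pi.mul_apply]
    rw [lintegral_subtype_comap measurableSet_Ioi
      (fun y : ℝ => ENNReal.ofReal (y ^ (Module.finrank ℝ E2 - 1)) * f y)]
    have : Module.finrank ℝ E2 - 1 = 1 := by
      simp [finrank_euclideanSpace_fin]
    rw [this]
    simp [pow_one]
  calc ∫⁻ a : sphere (0:E2) 1, (∫⁻ y : Ioi (0:ℝ), f ↑y
        ∂(Measure.volumeIoiPow (Module.finrank ℝ E2 - 1))) ∂(volume : Measure E2).toSphere
      = ∫⁻ _ : sphere (0:E2) 1, (∫⁻ y in Ioi (0:ℝ), ENNReal.ofReal y * f y)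
          ∂(volume : Measure E2).toSphere := by
        exact lintegral_congr h4
    _ = κ * ∫⁻ y in Ioi (0:ℝ), ENNReal.ofReal y * f y := by
        rw [lintegral_const, κ]; ring


lemma lint_ball (R : ℝ) :
    ∫⁻ z in ball (0:E2) R, ENNReal.ofReal ‖z‖⁻¹ ≤ κ * ENNReal.ofReal R := by
  have hf : Measurable fun y : ℝ => if y < R then ENNReal.ofReal y⁻¹ else 0 :=
    Measurable.ite measurableSet_Iio (measurable_id.inv.ennreal_ofReal) measurable_const
  have h0 : ∫⁻ z in ball (0:E2) R, ENNReal.ofReal ‖z‖⁻¹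
      = ∫⁻ z : E2, (if ‖z‖ < R then ENNReal.ofReal ‖z‖⁻¹ else 0) := by
    rw [← lintegral_indicator measurableSet_ball]
    refine lintegral_congr fun z => ?_
    classical
    rw [Set.indicator_apply]
    by_cases h : ‖z‖ < R
    · rw [if_pos (mem_ball_zero_iff.mpr h), if_pos h]
    · rw [if_neg (fun hm => h (mem_ball_zero_iff.mp hm)), if_neg h]
  rw [h0, polar _ hf]
  refine mul_le_mul_right ?_ κ
  calc ∫⁻ y in Ioi (0:ℝ), ENNReal.ofReal y * (if y < R then ENNReal.ofReal y⁻¹ else 0)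
      ≤ ∫⁻ y in Ioi (0:ℝ), (Iio R).indicator (fun _ => 1) y := by
        refine setLIntegral_mono (measurable_one.indicator measurableSet_Iio) fun y hy => ?_
        by_cases h : y < R
        · simp only [if_pos h, Set.indicator_of_mem (show y ∈ Iio R from h)]
          rw [← ENNReal.ofReal_mul (le_of_lt hy), mul_inv_cancel₀ (ne_of_gt hy)]
          simp
        · simp [if_neg h, Set.indicator_of_notMem (show y ∉ Iio R from h)]
    _ = volume (Iio R ∩ Ioi (0:ℝ)) := by
        rw [lintegral_indicator measurableSet_Iio, setLIntegral_one,
          Measure.restrict_apply measurableSet_Iio]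
    _ ≤ ENNReal.ofReal R := by
        rw [Set.Iio_inter_Ioi, Real.volume_Ioo]
        simp

lemma lint_tail (r R : ℝ) (hr0 : 0 ≤ r) (hR : 1 ≤ R) :
    ∫⁻ z in {z : E2 | R ≤ ‖z‖}, ENNReal.ofReal ((1+‖z‖) ^ (-3-r))
      ≤ κ * ENNReal.ofReal (R ^ (-1-r) / (1+r)) := by
  have hmb : Measurable fun y : ℝ => ENNReal.ofReal ((1+y) ^ (-3-r)) := by fun_prop
  have hf : Measurable fun y : ℝ =>
      if R ≤ y then ENNReal.ofReal ((1+y) ^ (-3-r)) else 0 :=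
    Measurable.ite measurableSet_Ici hmb measurable_const
  have h0 : ∫⁻ z in {z : E2 | R ≤ ‖z‖}, ENNReal.ofReal ((1+‖z‖) ^ (-3-r))
      = ∫⁻ z : E2, (if R ≤ ‖z‖ then ENNReal.ofReal ((1+‖z‖) ^ (-3-r)) else 0) := by
    rw [← lintegral_indicator (measurableSet_le measurable_const measurable_norm)]
    refine lintegral_congr fun z => ?_
    simp [Set.indicator_apply]
  rw [h0, polar _ hf]
  refine mul_le_mul_right ?_ κ
  calc ∫⁻ y in Ioi (0:ℝ), ENNReal.ofReal y * (if R ≤ y then ENNReal.ofReal ((1+y) ^ (-3-r)) else 0)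
      ≤ ∫⁻ y in Ioi (0:ℝ), (Ici R).indicator (fun y => ENNReal.ofReal (y ^ (-2-r))) y := by
        refine setLIntegral_mono ((by fun_prop : Measurable fun y : ℝ =>
          ENNReal.ofReal (y ^ (-2-r))).indicator measurableSet_Ici) fun y hy => ?_
        by_cases h : R ≤ y
        · have hy0 : (0:ℝ) < y := hy
          simp only [if_pos h, Set.indicator_of_mem (show y ∈ Ici R from h)]
          rw [← ENNReal.ofReal_mul hy0.le]
          refine ENNReal.ofReal_le_ofReal ?_
          have h1 : (1+y) ^ (-3-r) ≤ y ^ (-3-r) :=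
            Real.rpow_le_rpow_of_nonpos hy0 (by linarith) (by linarith)
          calc y * (1+y) ^ (-3-r) ≤ y * y ^ (-3-r) :=
                mul_le_mul_of_nonneg_left h1 hy0.le
            _ = y ^ (1:ℝ) * y ^ (-3-r) := by rw [Real.rpow_one]
            _ = y ^ (1 + (-3-r)) := (Real.rpow_add hy0 _ _).symm
            _ = y ^ (-2-r) := by rw [show (1 + (-3-r) : ℝ) = -2-r by ring]
        · simp [if_neg h, Set.indicator_of_notMem (show y ∉ Ici R from h)]
    _ = ∫⁻ y in Ioi R, ENNReal.ofReal (y ^ (-2-r)) := by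
        have hss : Ici R ∩ Ioi (0:ℝ) = Ici R :=
          Set.inter_eq_left.mpr fun y hy => lt_of_lt_of_le zero_lt_one (le_trans hR hy)
        rw [lintegral_indicator measurableSet_Ici, Measure.restrict_restrict measurableSet_Ici,
          hss, ← Measure.restrict_congr_set Ioi_ae_eq_Ici]
    _ ≤ ENNReal.ofReal (R ^ (-1-r) / (1+r)) := by
        have hInt : IntegrableOn (fun y : ℝ => y ^ (-2-r)) (Ioi R) volume :=
          integrableOn_Ioi_rpow_of_lt (by linarith) (by linarith)
        have hnn : 0 ≤ᵐ[volume.restrict (Ioi R)] fun y : ℝ => y ^ (-2-r) := by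
          filter_upwards [ae_restrict_mem measurableSet_Ioi] with y hy
          exact Real.rpow_nonneg (by have : (0:ℝ) < y := lt_of_lt_of_le (by linarith) hy.le; linarith) _
        rw [← ofReal_integral_eq_lintegral_ofReal hInt hnn,
          integral_Ioi_rpow_of_lt (by linarith) (by linarith)]
        refine ENNReal.ofReal_le_ofReal (le_of_eq ?_)
        have e1 : (-2-r+1 : ℝ) = -1-r := by ring
        rw [e1]
        rw [div_eq_div_iff (by linarith) (by linarith)]
        ring


/-- Weighted convolution estimate: for `r ∈ [0,1)` there is `C = C(r) > 0` such that
for all `|x| ≥ 1`, `∫_{|z| ≥ |x|/2} |x−z|⁻¹ (1+|z|)^{−2−r} dz ≤ C (1+|x|)^{−1−r}`. -/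
theorem weighted_convolution_estimate (r : ℝ) (hr0 : 0 ≤ r) (hr1 : r < 1) :
    ∃ C : ℝ, 0 < C ∧ ∀ x : EuclideanSpace ℝ (Fin 2), 1 ≤ ‖x‖ →
      ∫ z in {z : EuclideanSpace ℝ (Fin 2) | ‖x‖ / 2 ≤ ‖z‖},
          ‖x - z‖⁻¹ * (1 + ‖z‖) ^ (-2 - r)
        ≤ C * (1 + ‖x‖) ^ (-1 - r) := by
  classical
  set V : ℝ≥0∞ := volume (ball (0:E2) 1) with hV
  set D : ℝ≥0∞ := ENNReal.ofReal ((3/4 : ℝ) ^ (-2-r) / 4) * κ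
      + ENNReal.ofReal (36 * (2:ℝ) ^ (2+r)) * V
      + ENNReal.ofReal (4 / (1+r)) * κ with hD
  have hVne : V ≠ ⊤ := measure_ball_lt_top.ne
  have hDne : D ≠ ⊤ := by
    rw [hD]
    refine ENNReal.add_ne_top.mpr ⟨ENNReal.add_ne_top.mpr ⟨?_, ?_⟩, ?_⟩ <;>
      exact ENNReal.mul_ne_top ENNReal.ofReal_ne_top (by first | exact kappa_ne_top | exact hVne)
  refine ⟨D.toReal + 1, by linarith [ENNReal.toReal_nonneg (a := D)], fun x hx => ?_⟩
  set n := ‖x‖ with hn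
  have hn1 : (1:ℝ) ≤ n := hx
  set t : ℝ := 1 + n with htdef
  have ht : (0:ℝ) < t := by simp only [htdef]; linarith
  have htn : n ≤ t := by simp only [htdef]; linarith
  have h2n : t ≤ 2*n := by simp only [htdef]; linarith
  have hm : Measurable fun z : E2 => ‖x - z‖⁻¹ * (1 + ‖z‖) ^ (-2-r) := by fun_prop
  set S := {z : E2 | n / 2 ≤ ‖z‖} with hSdef
  have hnn : ∀ z : E2, 0 ≤ ‖x - z‖⁻¹ * (1 + ‖z‖) ^ (-2-r) := fun z => by positivity
  set g : E2 → ℝ≥0∞ := fun z => ENNReal.ofReal (‖x - z‖⁻¹ * (1 + ‖z‖) ^ (-2-r)) with hg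
  -- auxiliary rpow facts
  have hpow : t ^ (-2-r) * t = t ^ (-1-r) := by
    calc t ^ (-2-r) * t = t ^ (-2-r) * t ^ (1:ℝ) := by rw [Real.rpow_one]
      _ = t ^ (-2-r+1) := (Real.rpow_add ht _ _).symm
      _ = t ^ (-1-r) := by rw [show (-2-r+1:ℝ) = -1-r by ring]
  -- the three regions
  set A := ball x (n/4) with hAdef
  set Bs := {z : E2 | ‖z‖ ≤ 2*n} \ A with hBdef
  set Cs := {z : E2 | 2*n ≤ ‖z‖} with hCdef
  have hcov : S ⊆ (A ∪ (S ∩ Bs)) ∪ Cs := by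
    intro z hz
    by_cases h1 : z ∈ A
    · exact Or.inl (Or.inl h1)
    · by_cases h2 : ‖z‖ ≤ 2*n
      · exact Or.inl (Or.inr ⟨hz, ⟨h2, h1⟩⟩)
      · exact Or.inr (le_of_not_ge h2)
  -- piece A
  have hA : ∫⁻ z in A, g z
      ≤ ENNReal.ofReal ((3/4 : ℝ) ^ (-2-r) / 4) * κ * ENNReal.ofReal (t ^ (-1-r)) := by
    have hball : ∀ z ∈ A, g z
        ≤ ENNReal.ofReal (((3/4 : ℝ) * t) ^ (-2-r)) * ENNReal.ofReal ‖x - z‖⁻¹ := by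
      intro z hz
      have hzx : ‖x - z‖ < n/4 := by
        rw [hAdef, mem_ball, dist_eq_norm] at hz
        rw [norm_sub_rev]; exact hz
      have hzl : 3/4 * t ≤ 1 + ‖z‖ := by
        have h1 : n - ‖z‖ ≤ ‖x - z‖ := norm_sub_norm_le x z
        simp only [htdef]; linarith
      simp only [hg]
      rw [ENNReal.ofReal_mul (by positivity), mul_comm]
      refine mul_le_mul_left (ENNReal.ofReal_le_ofReal ?_) _
      exact Real.rpow_le_rpow_of_nonpos (by linarith) hzl (by linarith)
    calc ∫⁻ z in A, g z
        ≤ ∫⁻ z in A, ENNReal.ofReal (((3/4:ℝ)*t) ^ (-2-r)) * ENNReal.ofReal ‖x - z‖⁻¹ :=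
          setLIntegral_mono (by fun_prop) hball
      _ = ENNReal.ofReal (((3/4:ℝ)*t) ^ (-2-r)) * ∫⁻ z in A, ENNReal.ofReal ‖x - z‖⁻¹ :=
          lintegral_const_mul _ (by fun_prop)
      _ = ENNReal.ofReal (((3/4:ℝ)*t) ^ (-2-r)) * ∫⁻ w in ball (0:E2) (n/4), ENNReal.ofReal ‖w‖⁻¹ := by
          congr 1
          have hGm : Measurable fun w : E2 =>
              (ball (0:E2) (n/4)).indicator (fun w => ENNReal.ofReal ‖w‖⁻¹) w :=
            ((by fun_prop : Measurable fun w : E2 => ENNReal.ofReal ‖w‖⁻¹)).indicator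
              measurableSet_ball
          rw [hAdef, ← lintegral_indicator measurableSet_ball, ← lintegral_indicator measurableSet_ball]
          have hmp := (Measure.measurePreserving_sub_left (volume : Measure E2) x).lintegral_comp hGm
          rw [← hmp]
          refine lintegral_congr fun z => ?_
          rw [Set.indicator_apply, Set.indicator_apply]
          have hiff : z ∈ ball x (n/4) ↔ x - z ∈ ball (0:E2) (n/4) := by
            rw [mem_ball, dist_eq_norm, mem_ball_zero_iff, norm_sub_rev]
          by_cases h : z ∈ ball x (n/4)
          · rw [if_pos h, if_pos (hiff.mp h)]
          · rw [if_neg h, if_neg (fun hc => h (hiff.mpr hc))]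
      _ ≤ ENNReal.ofReal (((3/4:ℝ)*t) ^ (-2-r)) * (κ * ENNReal.ofReal (n/4)) :=
          mul_le_mul_right (lint_ball _) _
      _ ≤ ENNReal.ofReal ((3/4 : ℝ) ^ (-2-r) / 4) * κ * ENNReal.ofReal (t ^ (-1-r)) := by
          have hreal : ((3/4:ℝ)*t) ^ (-2-r) * (n/4) ≤ (3/4:ℝ) ^ (-2-r) / 4 * t ^ (-1-r) := by
            have hsplit : ((3/4:ℝ)*t) ^ (-2-r) = (3/4:ℝ) ^ (-2-r) * t ^ (-2-r) :=
              Real.mul_rpow (by norm_num) ht.le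
            calc ((3/4:ℝ)*t) ^ (-2-r) * (n/4)
                = (3/4:ℝ) ^ (-2-r) * t ^ (-2-r) * (n/4) := by rw [hsplit]
              _ ≤ (3/4:ℝ) ^ (-2-r) * t ^ (-2-r) * (t/4) :=
                  mul_le_mul_of_nonneg_left (by linarith) (by positivity)
              _ = (3/4:ℝ) ^ (-2-r) / 4 * (t ^ (-2-r) * t) := by ring
              _ = (3/4:ℝ) ^ (-2-r) / 4 * t ^ (-1-r) := by rw [hpow]
          calc ENNReal.ofReal (((3/4:ℝ)*t) ^ (-2-r)) * (κ * ENNReal.ofReal (n/4))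
              = κ * (ENNReal.ofReal (((3/4:ℝ)*t) ^ (-2-r)) * ENNReal.ofReal (n/4)) := by ring
            _ = κ * ENNReal.ofReal (((3/4:ℝ)*t) ^ (-2-r) * (n/4)) := by
                rw [← ENNReal.ofReal_mul (by positivity)]
            _ ≤ κ * ENNReal.ofReal ((3/4:ℝ) ^ (-2-r) / 4 * t ^ (-1-r)) :=
                mul_le_mul_right (ENNReal.ofReal_le_ofReal hreal) _
            _ = κ * (ENNReal.ofReal ((3/4:ℝ) ^ (-2-r) / 4) * ENNReal.ofReal (t ^ (-1-r))) := by
                rw [← ENNReal.ofReal_mul (by positivity)]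
            _ = ENNReal.ofReal ((3/4 : ℝ) ^ (-2-r) / 4) * κ * ENNReal.ofReal (t ^ (-1-r)) := by
                ring
  -- piece B
  have hB : ∫⁻ z in S ∩ Bs, g z
      ≤ ENNReal.ofReal (36 * (2:ℝ) ^ (2+r)) * V * ENNReal.ofReal (t ^ (-1-r)) := by
    have hBsub : S ∩ Bs ⊆ ball (0:E2) (3*n) := by
      intro z hz
      have h2 : ‖z‖ ≤ 2*n := hz.2.1
      rw [mem_ball_zero_iff]; linarith
    have hBpt : ∀ z ∈ S ∩ Bs, g z ≤ ENNReal.ofReal ((n/4)⁻¹ * ((1/2:ℝ)*t) ^ (-2-r)) := by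
      intro z hz
      obtain ⟨hzS, hz2, hzA⟩ := hz
      have hS' : n/2 ≤ ‖z‖ := hzS
      have hA' : n/4 ≤ ‖x - z‖ := by
        have h1 : ¬ dist z x < n/4 := fun hc => hzA (mem_ball.mpr hc)
        rw [dist_eq_norm] at h1
        rw [norm_sub_rev]
        exact le_of_not_gt h1
      simp only [hg]
      refine ENNReal.ofReal_le_ofReal ?_
      have hf1 : ‖x - z‖⁻¹ ≤ (n/4)⁻¹ := inv_anti₀ (by linarith) hA'
      have hf2 : (1 + ‖z‖) ^ (-2-r) ≤ ((1/2:ℝ)*t) ^ (-2-r) := by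
        refine Real.rpow_le_rpow_of_nonpos (by linarith) ?_ (by linarith)
        simp only [htdef]; linarith
      exact mul_le_mul hf1 hf2 (Real.rpow_nonneg (by positivity) _) (by positivity)
    calc ∫⁻ z in S ∩ Bs, g z
        ≤ ∫⁻ _ in S ∩ Bs, ENNReal.ofReal ((n/4)⁻¹ * ((1/2:ℝ)*t) ^ (-2-r)) :=
          setLIntegral_mono measurable_const hBpt
      _ = ENNReal.ofReal ((n/4)⁻¹ * ((1/2:ℝ)*t) ^ (-2-r)) * volume (S ∩ Bs) :=
          setLIntegral_const _ _
      _ ≤ ENNReal.ofReal ((n/4)⁻¹ * ((1/2:ℝ)*t) ^ (-2-r)) * volume (ball (0:E2) (3*n)) :=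
          mul_le_mul_right (measure_mono hBsub) _
      _ = ENNReal.ofReal ((n/4)⁻¹ * ((1/2:ℝ)*t) ^ (-2-r)) * (ENNReal.ofReal ((3*n) ^ 2) * V) := by
          rw [Measure.addHaar_ball (volume : Measure E2) (0:E2) (by positivity : (0:ℝ) ≤ 3*n)]
          norm_num [finrank_euclideanSpace_fin]
          rw [hV]; norm_num [finrank_euclideanSpace_fin]
      _ ≤ ENNReal.ofReal (36 * (2:ℝ) ^ (2+r)) * V * ENNReal.ofReal (t ^ (-1-r)) := by
          have hn0 : (0:ℝ) < n := by linarith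
          have h12 : ((1/2:ℝ)*t) ^ (-2-r) = (2:ℝ) ^ (2+r) * t ^ (-2-r) := by
            rw [Real.mul_rpow (by norm_num) ht.le]
            congr 1
            rw [show (-2-r:ℝ) = -(2+r) by ring,
              Real.rpow_neg (by norm_num : (0:ℝ) ≤ 1/2),
              show ((1:ℝ)/2) = (2:ℝ)⁻¹ by norm_num,
              Real.inv_rpow (by norm_num : (0:ℝ) ≤ 2), inv_inv]
          have hreal : (n/4)⁻¹ * ((1/2:ℝ)*t) ^ (-2-r) * (3*n) ^ 2
              ≤ 36 * (2:ℝ) ^ (2+r) * t ^ (-1-r) := by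
            calc (n/4)⁻¹ * ((1/2:ℝ)*t) ^ (-2-r) * (3*n) ^ 2
                = 36 * n * ((2:ℝ) ^ (2+r) * t ^ (-2-r)) := by
                  rw [h12]; field_simp; ring
              _ ≤ 36 * t * ((2:ℝ) ^ (2+r) * t ^ (-2-r)) :=
                  mul_le_mul_of_nonneg_right (by linarith) (by positivity)
              _ = 36 * (2:ℝ) ^ (2+r) * (t ^ (-2-r) * t) := by ring
              _ = 36 * (2:ℝ) ^ (2+r) * t ^ (-1-r) := by rw [hpow]
          calc ENNReal.ofReal ((n/4)⁻¹ * ((1/2:ℝ)*t) ^ (-2-r)) * (ENNReal.ofReal ((3*n) ^ 2) * V)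
              = (ENNReal.ofReal ((n/4)⁻¹ * ((1/2:ℝ)*t) ^ (-2-r)) * ENNReal.ofReal ((3*n) ^ 2)) * V := by
                ring
            _ = ENNReal.ofReal ((n/4)⁻¹ * ((1/2:ℝ)*t) ^ (-2-r) * (3*n) ^ 2) * V := by
                rw [← ENNReal.ofReal_mul (by positivity)]
            _ ≤ ENNReal.ofReal (36 * (2:ℝ) ^ (2+r) * t ^ (-1-r)) * V :=
                mul_le_mul_left (ENNReal.ofReal_le_ofReal hreal) _
            _ = (ENNReal.ofReal (36 * (2:ℝ) ^ (2+r)) * ENNReal.ofReal (t ^ (-1-r))) * V := by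
                rw [← ENNReal.ofReal_mul (by positivity)]
            _ = ENNReal.ofReal (36 * (2:ℝ) ^ (2+r)) * V * ENNReal.ofReal (t ^ (-1-r)) := by
                ring
  -- piece C
  have hC : ∫⁻ z in Cs, g z
      ≤ ENNReal.ofReal (4/(1+r)) * κ * ENNReal.ofReal (t ^ (-1-r)) := by
    have hCpt : ∀ z ∈ Cs, g z ≤ ENNReal.ofReal 4 * ENNReal.ofReal ((1+‖z‖) ^ (-3-r)) := by
      intro z hz
      have hz2 : 2*n ≤ ‖z‖ := hz
      have hz1 : (1:ℝ) ≤ ‖z‖ := by linarith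
      have hxz : ‖z‖/2 ≤ ‖x - z‖ := by
        have h := norm_sub_norm_le z x
        rw [norm_sub_rev z x] at h
        linarith
      simp only [hg]
      rw [← ENNReal.ofReal_mul (by norm_num)]
      refine ENNReal.ofReal_le_ofReal ?_
      have hinv : ‖x - z‖⁻¹ ≤ 4 * (1+‖z‖)⁻¹ := by
        have h1 : ‖x - z‖⁻¹ ≤ (‖z‖/2)⁻¹ := inv_anti₀ (by linarith) hxz
        have h2 : (‖z‖/2)⁻¹ ≤ 4 * (1+‖z‖)⁻¹ := by
          rw [inv_div, ← div_eq_mul_inv, div_le_div_iff₀ (by linarith) (by linarith)]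
          nlinarith
        linarith
      calc ‖x - z‖⁻¹ * (1+‖z‖) ^ (-2-r)
          ≤ (4 * (1+‖z‖)⁻¹) * (1+‖z‖) ^ (-2-r) :=
            mul_le_mul_of_nonneg_right hinv (Real.rpow_nonneg (by positivity) _)
        _ = 4 * ((1+‖z‖) ^ (-1:ℝ) * (1+‖z‖) ^ (-2-r)) := by rw [Real.rpow_neg_one]; ring
        _ = 4 * (1+‖z‖) ^ (-3-r) := by
            rw [← Real.rpow_add (by positivity), show (-1 + (-2-r):ℝ) = -3-r by ring]
    calc ∫⁻ z in Cs, g z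
        ≤ ∫⁻ z in Cs, ENNReal.ofReal 4 * ENNReal.ofReal ((1+‖z‖) ^ (-3-r)) :=
          setLIntegral_mono (by fun_prop) hCpt
      _ = ENNReal.ofReal 4 * ∫⁻ z in Cs, ENNReal.ofReal ((1+‖z‖) ^ (-3-r)) :=
          lintegral_const_mul _ (by fun_prop)
      _ ≤ ENNReal.ofReal 4 * (κ * ENNReal.ofReal ((2*n) ^ (-1-r) / (1+r))) :=
          mul_le_mul_right (lint_tail r (2*n) hr0 (by linarith)) _
      _ ≤ ENNReal.ofReal (4/(1+r)) * κ * ENNReal.ofReal (t ^ (-1-r)) := by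
          have hreal : 4 * ((2*n) ^ (-1-r) / (1+r)) ≤ 4/(1+r) * t ^ (-1-r) := by
            have hmono : (2*n) ^ (-1-r) ≤ t ^ (-1-r) :=
              Real.rpow_le_rpow_of_nonpos ht h2n (by linarith)
            have h4r : (0:ℝ) ≤ 4/(1+r) := by positivity
            calc 4 * ((2*n) ^ (-1-r) / (1+r)) = 4/(1+r) * (2*n) ^ (-1-r) := by ring
              _ ≤ 4/(1+r) * t ^ (-1-r) := mul_le_mul_of_nonneg_left hmono h4r
          calc ENNReal.ofReal 4 * (κ * ENNReal.ofReal ((2*n) ^ (-1-r) / (1+r)))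
              = κ * (ENNReal.ofReal 4 * ENNReal.ofReal ((2*n) ^ (-1-r) / (1+r))) := by ring
            _ = κ * ENNReal.ofReal (4 * ((2*n) ^ (-1-r) / (1+r))) := by
                rw [← ENNReal.ofReal_mul (by norm_num)]
            _ ≤ κ * ENNReal.ofReal (4/(1+r) * t ^ (-1-r)) :=
                mul_le_mul_right (ENNReal.ofReal_le_ofReal hreal) _
            _ = κ * (ENNReal.ofReal (4/(1+r)) * ENNReal.ofReal (t ^ (-1-r))) := by
                rw [← ENNReal.ofReal_mul (by positivity)]
            _ = ENNReal.ofReal (4/(1+r)) * κ * ENNReal.ofReal (t ^ (-1-r)) := by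
                ring
  have hkey : ∫⁻ z in S, g z ≤ D * ENNReal.ofReal (t ^ (-1-r)) := by
    calc ∫⁻ z in S, g z ≤ ∫⁻ z in (A ∪ (S ∩ Bs)) ∪ Cs, g z := lintegral_mono_set hcov
      _ ≤ (∫⁻ z in A ∪ (S ∩ Bs), g z) + ∫⁻ z in Cs, g z := lintegral_union_le _ _ _
      _ ≤ ((∫⁻ z in A, g z) + ∫⁻ z in S ∩ Bs, g z) + ∫⁻ z in Cs, g z :=
          add_le_add_left (lintegral_union_le _ _ _) _
      _ ≤ (ENNReal.ofReal ((3/4 : ℝ) ^ (-2-r) / 4) * κ * ENNReal.ofReal (t ^ (-1-r))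
            + ENNReal.ofReal (36 * (2:ℝ) ^ (2+r)) * V * ENNReal.ofReal (t ^ (-1-r)))
            + ENNReal.ofReal (4/(1+r)) * κ * ENNReal.ofReal (t ^ (-1-r)) :=
          add_le_add (add_le_add hA hB) hC
      _ = D * ENNReal.ofReal (t ^ (-1-r)) := by rw [hD]; ring
  have heq : ∫ z in S, ‖x - z‖⁻¹ * (1 + ‖z‖) ^ (-2-r)
      = (∫⁻ z in S, g z).toReal :=
    integral_eq_lintegral_of_nonneg_ae (ae_of_all _ hnn) hm.aestronglyMeasurable
  have hfin : D * ENNReal.ofReal (t ^ (-1-r)) ≠ ⊤ :=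
    ENNReal.mul_ne_top hDne ENNReal.ofReal_ne_top
  have h1 : (∫⁻ z in S, g z).toReal ≤ (D * ENNReal.ofReal (t ^ (-1-r))).toReal :=
    ENNReal.toReal_mono hfin hkey
  have h2 : (D * ENNReal.ofReal (t ^ (-1-r))).toReal = D.toReal * t ^ (-1-r) := by
    rw [ENNReal.toReal_mul, ENNReal.toReal_ofReal (Real.rpow_nonneg ht.le _)]
  have hfinal : ∫ z in S, ‖x - z‖⁻¹ * (1 + ‖z‖) ^ (-2-r)
      ≤ (D.toReal + 1) * t ^ (-1-r) := by
    rw [heq]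
    refine le_trans h1 ?_
    rw [h2]
    have := Real.rpow_nonneg ht.le (-1-r)
    nlinarith
  exact hfinal


end
end
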